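/- arXiv:2007.06075 — 4 statements merged into one kernel-verified Lean document; each statement's English description precedes it below -/
import Mathlib

section
/- Let d ≥ 1, let M be an invertible d×d real matrix, and let f_1, …, f_d : ℝ → ℝ be differentiable functions with f_i(s) > 0 for all s ∈ ℝ. Let Λ : ℝ^d → ℝ^{d×d} be given by the diagonal matrix Λ(y) with entries Λ(y)_{ii} = f_i(y_i), and define σ : ℝ^d → ℝ^{d×d} by σ(y) = M · Λ(M^{-1} y) · Mᵀ. Then σ is differentiable, σ(y) is invertible for every y ∈ ℝ^d, and σ satisfies the curl condition. -/
open Matrix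

/-- The entrywise partial derivative of a matrix field `σ : ℝ^d → ℝ^{d×d}`
at `y` in the coordinate direction `e_k`. -/
noncomputable def matPartialDeriv {d : ℕ} (σ : (Fin d → ℝ) → Matrix (Fin d) (Fin d) ℝ)
    (y : Fin d → ℝ) (k : Fin d) : Matrix (Fin d) (Fin d) ℝ :=
  Matrix.of fun i l => fderiv ℝ (fun y => σ y i l) y (Pi.single k 1)

/-- The curl condition: for all `y`, `j`, `k`,
`(∂σ/∂y_k)(y) · σ(y)⁻¹ · e_j = (∂σ/∂y_j)(y) · σ(y)⁻¹ · e_k`. -/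
def CurlCondition {d : ℕ} (σ : (Fin d → ℝ) → Matrix (Fin d) (Fin d) ℝ) : Prop :=
  ∀ (y : Fin d → ℝ) (j k : Fin d),
    (matPartialDeriv σ y k * (σ y)⁻¹) *ᵥ Pi.single j 1
      = (matPartialDeriv σ y j * (σ y)⁻¹) *ᵥ Pi.single k 1

/-- Lemma 1 (iii): if `M` is an invertible `d×d` matrix,
`Λ(y)` is the diagonal matrix with entries `f_i(y_i)` for differentiable positive
functions `f_i`, and `σ(y) = M · Λ(M⁻¹ y) · Mᵀ`, then `σ` is differentiable,
`σ(y)` is invertible for every `y`, and `σ` satisfies the curl condition. -/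
theorem conjugated_diagonal_satisfies_curl_condition (d : ℕ) (hd : 1 ≤ d)
    (M : Matrix (Fin d) (Fin d) ℝ) (hM : IsUnit M)
    (f : Fin d → ℝ → ℝ)
    (hf_diff : ∀ i, Differentiable ℝ (f i))
    (hf_pos : ∀ i s, 0 < f i s)
    (Λ : (Fin d → ℝ) → Matrix (Fin d) (Fin d) ℝ)
    (hΛ : ∀ y, Λ y = Matrix.diagonal fun i => f i (y i))
    (σ : (Fin d → ℝ) → Matrix (Fin d) (Fin d) ℝ)
    (hσ : ∀ y, σ y = M * Λ (M⁻¹ *ᵥ y) * Mᵀ) :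
    (∀ i j, Differentiable ℝ fun y => σ y i j) ∧
      (∀ y, IsUnit (σ y)) ∧
      CurlCondition σ := by
  classical
  have hMdet : IsUnit M.det := (Matrix.isUnit_iff_isUnit_det M).mp hM
  have hMTdet : IsUnit Mᵀ.det := by rwa [Matrix.det_transpose]
  -- linear functional y ↦ (M⁻¹ *ᵥ y) a
  set L : Fin d → ((Fin d → ℝ) →L[ℝ] ℝ) :=
    fun a => ∑ b, M⁻¹ a b • (ContinuousLinearMap.proj b : (Fin d → ℝ) →L[ℝ] ℝ) with hLdef
  have hLapp : ∀ a (v : Fin d → ℝ), L a v = (M⁻¹ *ᵥ v) a := by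
    intro a v
    simp [hLdef, Matrix.mulVec, dotProduct, ContinuousLinearMap.sum_apply]
  have hL : ∀ a (y : Fin d → ℝ), HasFDerivAt (fun y => (M⁻¹ *ᵥ y) a) (L a) y := by
    intro a y
    have heq : (fun y : Fin d → ℝ => (M⁻¹ *ᵥ y) a) = ⇑(L a) :=
      funext fun v => (hLapp a v).symm
    rw [heq]; exact (L a).hasFDerivAt
  have hfun : ∀ i l, (fun y => σ y i l)
      = fun y => ∑ a, M i a * f a ((M⁻¹ *ᵥ y) a) * M l a := by
    intro i l; funext y
    rw [hσ, hΛ, Matrix.mul_apply]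
    simp [Matrix.mul_diagonal, Matrix.transpose_apply]
  have hEntry : ∀ (y : Fin d → ℝ) (i l : Fin d),
      HasFDerivAt (fun y => σ y i l)
        (∑ a, (M l a) • ((M i a) • (deriv (f a) ((M⁻¹ *ᵥ y) a) • L a))) y := by
    intro y i l
    rw [hfun i l]
    apply HasFDerivAt.fun_sum
    intro a _
    have h1 : HasFDerivAt (fun y => f a ((M⁻¹ *ᵥ y) a))
        (deriv (f a) ((M⁻¹ *ᵥ y) a) • L a) y :=
      ((hf_diff a ((M⁻¹ *ᵥ y) a)).hasDerivAt).comp_hasFDerivAt y (hL a y)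
    exact (h1.const_mul (M i a)).mul_const (M l a)
  have hPD : ∀ (y : Fin d → ℝ) (k : Fin d),
      matPartialDeriv σ y k
        = M * Matrix.diagonal (fun a => deriv (f a) ((M⁻¹ *ᵥ y) a) * M⁻¹ a k) * Mᵀ := by
    intro y k
    ext i l
    show fderiv ℝ (fun y => σ y i l) y (Pi.single k 1) = _
    rw [(hEntry y i l).fderiv]
    simp only [ContinuousLinearMap.coe_sum', Finset.sum_apply,
      ContinuousLinearMap.coe_smul', Pi.smul_apply, hLapp, Matrix.mulVec_single_one, Matrix.col_apply,
      Matrix.mul_apply, Matrix.diagonal_apply, Matrix.transpose_apply, smul_eq_mul, mul_one,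
      mul_ite, ite_mul, mul_zero, zero_mul, Finset.sum_ite_eq, Finset.sum_ite_eq',
      Finset.mem_univ, if_true]
    exact Finset.sum_congr rfl fun a _ => by ring
  have hσy : ∀ y : Fin d → ℝ,
      σ y = M * Matrix.diagonal (fun a => f a ((M⁻¹ *ᵥ y) a)) * Mᵀ := by
    intro y; rw [hσ, hΛ]
  have hDinv : ∀ y : Fin d → ℝ,
      (Matrix.diagonal (fun a => f a ((M⁻¹ *ᵥ y) a)))⁻¹
        = Matrix.diagonal (fun a => (f a ((M⁻¹ *ᵥ y) a))⁻¹) := by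
    intro y
    apply Matrix.inv_eq_right_inv
    rw [Matrix.diagonal_mul_diagonal]
    rw [show (fun a => f a ((M⁻¹ *ᵥ y) a) * (f a ((M⁻¹ *ᵥ y) a))⁻¹) = fun _ : Fin d => (1:ℝ)
      from funext fun a => mul_inv_cancel₀ (hf_pos a _).ne', Matrix.diagonal_one]
  have hσinv : ∀ y : Fin d → ℝ,
      (σ y)⁻¹ = Mᵀ⁻¹ * (Matrix.diagonal (fun a => (f a ((M⁻¹ *ᵥ y) a))⁻¹) * M⁻¹) := by
    intro y
    rw [hσy, Matrix.mul_inv_rev, Matrix.mul_inv_rev, hDinv]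
  have hprod : ∀ (y : Fin d → ℝ) (k : Fin d),
      matPartialDeriv σ y k * (σ y)⁻¹
        = M * (Matrix.diagonal
            (fun a => deriv (f a) ((M⁻¹ *ᵥ y) a) * M⁻¹ a k * (f a ((M⁻¹ *ᵥ y) a))⁻¹) * M⁻¹) := by
    intro y k
    rw [hPD, hσinv]
    simp only [Matrix.mul_assoc]
    rw [← Matrix.mul_assoc Mᵀ Mᵀ⁻¹, Matrix.mul_nonsing_inv _ hMTdet, Matrix.one_mul,
      ← Matrix.mul_assoc (Matrix.diagonal _) (Matrix.diagonal _), Matrix.diagonal_mul_diagonal]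
  refine ⟨fun i l y => (hEntry y i l).differentiableAt, ?_, ?_⟩
  · intro y
    rw [Matrix.isUnit_iff_isUnit_det, hσy, Matrix.det_mul, Matrix.det_mul,
      Matrix.det_transpose, Matrix.det_diagonal]
    exact (hMdet.mul (isUnit_iff_ne_zero.mpr
      (Finset.prod_ne_zero_iff.mpr fun a _ => (hf_pos a _).ne'))).mul hMdet
  · intro y j k
    funext i
    rw [hprod, hprod]
    simp only [Matrix.mulVec_single_one, Matrix.col_apply, mul_one, Matrix.mul_apply, Matrix.diagonal_apply,
      mul_ite, ite_mul, mul_zero, zero_mul, Finset.sum_ite_eq, Finset.sum_ite_eq',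
      Finset.mem_univ, if_true]
    exact Finset.sum_congr rfl fun a _ => by ring
end

section
/- Let d ≥ 1 and let σ : ℝ^d → ℝ^{d×d} be differentiable such that σ(y) is a symmetric positive definite matrix for every y ∈ ℝ^d, and suppose σ satisfies the curl condition. Then there exists a convex differentiable function φ : ℝ^d → ℝ whose gradient ∇φ : ℝ^d → ℝ^d is differentiable everywhere and satisfies D(∇φ)(y) = σ(y)^{-1} for all y ∈ ℝ^d; that is, σ^{-1} is the Hessian of a convex function. -/
open Matrix

open Filter Asymptotics

lemma abs_sub_uIcc {a b s : ℝ} (hs : s ∈ Set.uIcc a b) : |s - a| ≤ |b - a| :=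
  Set.abs_sub_left_of_mem_uIcc hs

lemma hasFDerivAt_of_partials {d : ℕ} (f : (Fin d → ℝ) → ℝ) (g : Fin d → (Fin d → ℝ) → ℝ)
    (hg : ∀ j, Continuous (g j))
    (hpart : ∀ (y : Fin d → ℝ) (j : Fin d),
      HasDerivAt (fun s => f (Function.update y j s)) (g j y) (y j)) (p : Fin d → ℝ) :
    HasFDerivAt f (∑ j, g j p • (ContinuousLinearMap.proj j : ((Fin d → ℝ) →L[ℝ] ℝ))) p := by
  set L : (Fin d → ℝ) →L[ℝ] ℝ := ∑ j, g j p • (ContinuousLinearMap.proj j) with hLdef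
  have hL : ∀ w : Fin d → ℝ, L w = ∑ j, g j p * w j := by
    intro w
    simp [hLdef, ContinuousLinearMap.sum_apply, ContinuousLinearMap.smul_apply,
      ContinuousLinearMap.proj_apply, smul_eq_mul]
  rw [hasFDerivAt_iff_isLittleO]
  rw [Asymptotics.isLittleO_iff]
  intro c hc
  set ε : ℝ := c / (d + 1) with hεdef
  have hεpos : 0 < ε := by positivity
  have hev : ∀ᶠ z in nhds p, ∀ j, |g j z - g j p| ≤ ε := by
    rw [eventually_all]
    intro j
    have h1 := Metric.tendsto_nhds.mp ((hg j).tendsto p) ε hεpos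
    exact h1.mono fun z hz => by rw [Real.dist_eq] at hz; linarith
  obtain ⟨δ, hδpos, hδ⟩ := Metric.eventually_nhds_iff.mp hev
  filter_upwards [Metric.ball_mem_nhds p hδpos] with y hy
  rw [Metric.mem_ball] at hy
  -- telescoping points
  set z : ℕ → (Fin d → ℝ) := fun m i => if (i : ℕ) < m then y i else p i with hzdef
  have hz0 : z 0 = p := by funext i; simp [hzdef]
  have hzd : z d = y := by funext i; simp [hzdef, i.isLt]
  have key : ∀ j : Fin d,
      |f (z ((j : ℕ) + 1)) - f (z (j : ℕ)) - g j p * (y j - p j)| ≤ ε * |y j - p j| := by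
    intro j
    have hzsucc : z ((j : ℕ) + 1) = Function.update (z (j : ℕ)) j (y j) := by
      funext i
      rcases eq_or_ne i j with rfl | hij
      · simp [hzdef, Function.update_self]
      · have hne : (i : ℕ) ≠ (j : ℕ) := fun h => hij (Fin.ext h)
        rw [Function.update_of_ne hij]
        simp only [hzdef]
        by_cases hlt : (i : ℕ) < (j : ℕ)
        · rw [if_pos hlt, if_pos (by omega)]
        · rw [if_neg hlt, if_neg (by omega)]
    have hzj : z (j : ℕ) = Function.update (z (j : ℕ)) j (p j) := by
      funext i
      rcases eq_or_ne i j with rfl | hij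
      · simp [hzdef, Function.update_self]
      · simp [Function.update_of_ne hij]
    set h : ℝ → ℝ := fun s => f (Function.update (z (j : ℕ)) j s) - g j p * s with hhdef
    have hderiv : ∀ s ∈ Set.uIcc (p j) (y j),
        HasDerivWithinAt h (g j (Function.update (z (j : ℕ)) j s) - g j p)
          (Set.uIcc (p j) (y j)) s := by
      intro s _
      set y' := Function.update (z (j : ℕ)) j s with hy'
      have h1 : HasDerivAt (fun s' => f (Function.update y' j s')) (g j y') (y' j) :=
        hpart y' j
      have h2 : (fun s' => f (Function.update y' j s')) =
          fun s' => f (Function.update (z (j : ℕ)) j s') := by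
        funext s'; rw [hy', Function.update_idem]
      have h3 : y' j = s := Function.update_self _ _ _
      rw [h2, h3] at h1
      exact ((h1.sub (by simpa using (hasDerivAt_id s).const_mul (g j p))).hasDerivWithinAt)
    have hbound : ∀ s ∈ Set.uIcc (p j) (y j),
        ‖g j (Function.update (z (j : ℕ)) j s) - g j p‖ ≤ ε := by
      intro s hs
      have hle : dist (Function.update (z (j : ℕ)) j s) p ≤ dist y p := by
        rw [dist_pi_le_iff dist_nonneg]
        intro i
        rcases eq_or_ne i j with rfl | hij
        · rw [Function.update_self, Real.dist_eq]
          calc |s - p i| ≤ |y i - p i| := abs_sub_uIcc hs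
            _ = dist (y i) (p i) := (Real.dist_eq _ _).symm
            _ ≤ dist y p := dist_le_pi_dist y p i
        · rw [Function.update_of_ne hij]
          by_cases hlt : (i : ℕ) < (j : ℕ)
          · simp only [hzdef, if_pos hlt]
            exact dist_le_pi_dist y p i
          · simp only [hzdef, if_neg hlt, dist_self]
            exact dist_nonneg
      have := hδ (lt_of_le_of_lt hle hy) j
      simpa [Real.norm_eq_abs] using this
    have hmvt := (convex_uIcc (p j) (y j)).norm_image_sub_le_of_norm_hasDerivWithin_le
      hderiv hbound Set.left_mem_uIcc Set.right_mem_uIcc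
    have heq : h (y j) - h (p j) = f (z ((j : ℕ) + 1)) - f (z (j : ℕ)) - g j p * (y j - p j) := by
      simp only [hhdef]
      rw [← hzsucc, ← hzj]
      ring
    calc |f (z ((j : ℕ) + 1)) - f (z (j : ℕ)) - g j p * (y j - p j)|
        = ‖h (y j) - h (p j)‖ := by rw [heq, Real.norm_eq_abs]
      _ ≤ ε * ‖y j - p j‖ := hmvt
      _ = ε * |y j - p j| := by rw [Real.norm_eq_abs]
  have htel : f y - f p = ∑ j : Fin d, (f (z ((j : ℕ) + 1)) - f (z (j : ℕ))) := by
    rw [Fin.sum_univ_eq_sum_range (fun m => f (z (m + 1)) - f (z m)) d,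
      Finset.sum_range_sub (fun m => f (z m)) d, hz0, hzd]
  have hLyp : L (y - p) = ∑ j : Fin d, g j p * (y j - p j) := by
    rw [hL]
    exact Finset.sum_congr rfl fun j _ => by rw [Pi.sub_apply]
  have hsum : f y - f p - L (y - p) =
      ∑ j : Fin d, (f (z ((j : ℕ) + 1)) - f (z (j : ℕ)) - g j p * (y j - p j)) := by
    rw [Finset.sum_sub_distrib, ← htel, hLyp]
  rw [hsum]
  calc ‖∑ j : Fin d, (f (z ((j : ℕ) + 1)) - f (z (j : ℕ)) - g j p * (y j - p j))‖
      ≤ ∑ j : Fin d, ‖f (z ((j : ℕ) + 1)) - f (z (j : ℕ)) - g j p * (y j - p j)‖ :=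
        norm_sum_le _ _
    _ ≤ ∑ j : Fin d, ε * |y j - p j| := Finset.sum_le_sum fun j _ => key j
    _ ≤ ∑ j : Fin d, ε * ‖y - p‖ := by
        refine Finset.sum_le_sum fun j _ => ?_
        have : |y j - p j| ≤ ‖y - p‖ := by
          calc |y j - p j| = ‖(y - p) j‖ := by rw [Pi.sub_apply, Real.norm_eq_abs]
            _ ≤ ‖y - p‖ := norm_le_pi_norm (y - p) j
        nlinarith [hεpos.le, norm_nonneg (y - p)]
    _ = (d : ℝ) * ε * ‖y - p‖ := by
        rw [Finset.sum_const, Finset.card_univ, Fintype.card_fin]; ring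
    _ ≤ c * ‖y - p‖ := by
        apply mul_le_mul_of_nonneg_right _ (norm_nonneg _)
        rw [hεdef]
        have hd1 : (0:ℝ) < (d:ℝ) + 1 := by positivity
        rw [div_eq_mul_inv]
        calc (d:ℝ) * (c * ((d:ℝ)+1)⁻¹) = c * ((d:ℝ) / ((d:ℝ)+1)) := by ring
          _ ≤ c * 1 := by
              apply mul_le_mul_of_nonneg_left _ hc.le
              rw [div_le_one hd1]; linarith
          _ = c := mul_one c

open MeasureTheory intervalIntegral

namespace CurlAux

variable {d : ℕ}

/-- Truncation: keep first `m` coordinates, zero the rest. -/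
def trunc (m : ℕ) (y : Fin d → ℝ) : Fin d → ℝ := fun i => if (i : ℕ) < m then y i else 0

lemma trunc_self (y : Fin d → ℝ) : trunc d y = y := by
  funext i; simp [trunc, i.isLt]

lemma update_trunc (k : Fin d) (y : Fin d → ℝ) :
    Function.update (trunc (k : ℕ) y) k (y k) = trunc ((k : ℕ) + 1) y := by
  funext i
  rcases eq_or_ne i k with rfl | hik
  · simp [trunc, Function.update_self]
  · have hne : (i : ℕ) ≠ (k : ℕ) := fun h => hik (Fin.ext h)
    rw [Function.update_of_ne hik]
    simp only [trunc]
    by_cases hlt : (i : ℕ) < (k : ℕ)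
    · rw [if_pos hlt, if_pos (by omega)]
    · rw [if_neg hlt, if_neg (by omega)]

lemma update_eq_affine (w : Fin d → ℝ) (j : Fin d) (t : ℝ) :
    Function.update w j t = Function.update w j 0 + t • (Pi.single j 1 : Fin d → ℝ) := by
  funext i
  rcases eq_or_ne i j with rfl | hij
  · simp [Function.update_self]
  · simp [Function.update_of_ne hij, Pi.single_eq_of_ne hij]

/-- The potential of a vector field, via integration along axis-parallel paths from 0. -/
noncomputable def pot (v : Fin d → (Fin d → ℝ) → ℝ) (y : Fin d → ℝ) : ℝ :=
  ∑ k : Fin d, ∫ t in (0:ℝ)..(y k), v k (Function.update (trunc (k : ℕ) y) k t)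

theorem exists_potential (v : Fin d → (Fin d → ℝ) → ℝ)
    (hv : ∀ j, Differentiable ℝ (v j))
    (hsym : ∀ (y : Fin d → ℝ) (j k : Fin d),
      fderiv ℝ (v j) y (Pi.single k 1) = fderiv ℝ (v k) y (Pi.single j 1)) :
    ∀ y : Fin d → ℝ, HasFDerivAt (pot v)
      (∑ j, v j y • (ContinuousLinearMap.proj j : ((Fin d → ℝ) →L[ℝ] ℝ))) y := by
  have hvc : ∀ j, Continuous (v j) := fun j => (hv j).continuous
  intro p
  apply hasFDerivAt_of_partials (pot v) v hvc _ p
  intro y j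
  -- the k-th summand of `pot v (update y j s)` as a function of s
  set I : Fin d → ℝ → ℝ := fun k s =>
    ∫ t in (0:ℝ)..(Function.update y j s k),
      v k (Function.update (trunc (k : ℕ) (Function.update y j s)) k t) with hIdef
  have hFI : (fun s => pot v (Function.update y j s)) = fun s => ∑ k : Fin d, I k s := by
    funext s; rfl
  set c : ℕ → ℝ := fun m => v j (trunc m y) with hcdef
  set D : Fin d → ℝ := fun k =>
    (c (max ((k : ℕ) + 1) ((j : ℕ) + 1)) - c (max (k : ℕ) ((j : ℕ) + 1))) +
      (if k = j then c ((j : ℕ) + 1) else 0) with hDdef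
  have key : ∀ k : Fin d, HasDerivAt (I k) (D k) (y j) := by
    intro k
    rcases lt_trichotomy (k : ℕ) (j : ℕ) with hkj | hkj | hkj
    · -- k < j : I k is constant
      have hne : k ≠ j := fun h => by rw [h] at hkj; omega
      have hconst : I k = fun _ => I k (y j) := by
        funext s
        have h1 : ∀ s' : ℝ, Function.update y j s' k = y k :=
          fun s' => Function.update_of_ne hne s' y
        have h2 : ∀ s' : ℝ, trunc (k : ℕ) (Function.update y j s') = trunc (k : ℕ) y := by
          intro s'
          funext i
          simp only [trunc]
          by_cases hlt : (i : ℕ) < (k : ℕ)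
          · rw [if_pos hlt, if_pos hlt, Function.update_of_ne]
            exact fun h => by rw [h] at hlt; omega
          · rw [if_neg hlt, if_neg hlt]
        simp only [hIdef, h1, h2]
      have : HasDerivAt (fun _ : ℝ => I k (y j)) 0 (y j) := hasDerivAt_const _ _
      rw [← hconst] at this
      convert this using 1
      have h3 : max ((k : ℕ) + 1) ((j : ℕ) + 1) = (j : ℕ) + 1 := by omega
      have h4 : max (k : ℕ) ((j : ℕ) + 1) = (j : ℕ) + 1 := by omega
      simp [hDdef, h3, h4, hne, max_eq_right hkj.le]
    · -- k = j
      have hk : k = j := Fin.ext hkj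
      subst hk
      have hIeq : I k = fun s => ∫ t in (0:ℝ)..s,
          v k (Function.update (trunc (k : ℕ) y) k t) := by
        funext s
        have h1 : Function.update y k s k = s := Function.update_self _ _ _
        have h2 : trunc (k : ℕ) (Function.update y k s) = trunc (k : ℕ) y := by
          funext i
          simp only [trunc]
          by_cases hlt : (i : ℕ) < (k : ℕ)
          · rw [if_pos hlt, if_pos hlt, Function.update_of_ne]
            exact fun h => by rw [h] at hlt; omega
          · rw [if_neg hlt, if_neg hlt]
        simp only [hIdef, h1, h2]
      have hG : Continuous (fun t => v k (Function.update (trunc (k : ℕ) y) k t)) :=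
        (hvc k).comp (continuous_const.update k continuous_id)
      have := (hG.integral_hasStrictDerivAt 0 (y k)).hasDerivAt
      rw [← hIeq] at this
      refine this.congr_deriv ?_
      symm
      rw [hDdef]
      simp only [if_pos rfl]
      have h5 : Function.update (trunc (k : ℕ) y) k (y k) = trunc ((k : ℕ) + 1) y :=
        update_trunc k y
      rw [h5]
      simp [hcdef]
    · -- j < k : use Green's theorem
      have hne : k ≠ j := fun h => by rw [h] at hkj; omega
      set w : Fin d → ℝ := trunc (k : ℕ) y with hwdef
      set emb : ℝ × ℝ → (Fin d → ℝ) :=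
        fun q => Function.update (Function.update w j q.1) k q.2 with hembdef
      set w0 : Fin d → ℝ := Function.update (Function.update w j 0) k 0 with hw0def
      set Lemb : ℝ × ℝ →L[ℝ] (Fin d → ℝ) :=
        (ContinuousLinearMap.fst ℝ ℝ ℝ).smulRight (Pi.single j 1) +
          (ContinuousLinearMap.snd ℝ ℝ ℝ).smulRight (Pi.single k 1) with hLembdef
      have hLapp : ∀ q : ℝ × ℝ,
          Lemb q = q.1 • (Pi.single j 1 : Fin d → ℝ) + q.2 • (Pi.single k 1 : Fin d → ℝ) := by
        intro q
        simp [hLembdef, ContinuousLinearMap.add_apply, ContinuousLinearMap.smulRight_apply]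
      have hembeq : ∀ q : ℝ × ℝ, emb q = w0 + Lemb q := by
        intro q
        rw [hLapp]
        funext i
        simp only [hembdef, hw0def, Pi.add_apply, Pi.smul_apply, smul_eq_mul]
        rcases eq_or_ne i k with rfl | hik
        · rw [Function.update_self, Function.update_self,
            Pi.single_eq_of_ne hne, Pi.single_eq_same]
          ring
        · rw [Function.update_of_ne hik, Function.update_of_ne hik,
            Pi.single_eq_of_ne hik]
          rcases eq_or_ne i j with rfl | hij
          · rw [Function.update_self, Function.update_self, Pi.single_eq_same]
            ring
          · rw [Function.update_of_ne hij, Function.update_of_ne hij,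
              Pi.single_eq_of_ne hij]
            ring
      have hembL : ∀ q : ℝ × ℝ, HasFDerivAt emb Lemb q := by
        intro q
        have h1 : emb = fun q => w0 + Lemb q := funext hembeq
        rw [h1]
        simpa using (hasFDerivAt_const w0 q).add Lemb.hasFDerivAt
      have hembc : Continuous emb := by
        have h1 : emb = fun q => w0 + Lemb q := funext hembeq
        rw [h1]
        exact continuous_const.add Lemb.continuous
      have hL10 : Lemb (1, 0) = (Pi.single j 1 : Fin d → ℝ) := by rw [hLapp]; simp
      have hL01 : Lemb (0, 1) = (Pi.single k 1 : Fin d → ℝ) := by rw [hLapp]; simp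
      have hIeq : I k = fun s => ∫ t in (0:ℝ)..(y k), v k (emb (s, t)) := by
        funext s
        have h1 : Function.update y j s k = y k := Function.update_of_ne hne s y
        have h3 : trunc (k : ℕ) (Function.update y j s) = Function.update w j s := by
          funext i
          rcases eq_or_ne i j with rfl | hij
          · rw [Function.update_self]
            simp [trunc, hkj, Function.update_self]
          · rw [Function.update_of_ne hij]
            simp only [trunc, hwdef]
            by_cases hlt : (i : ℕ) < (k : ℕ)
            · rw [if_pos hlt, if_pos hlt, Function.update_of_ne hij]
            · rw [if_neg hlt, if_neg hlt]
        simp only [hIdef, h1, h3]; rfl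
      have hdf : ∀ x : ℝ × ℝ, HasFDerivAt (fun q => v k (emb q))
          ((fderiv ℝ (v k) (emb x)).comp Lemb) x :=
        fun x => ((hv k) (emb x)).hasFDerivAt.comp x (hembL x)
      have hdg : ∀ x : ℝ × ℝ, HasFDerivAt (fun q => -(v j (emb q)))
          (-((fderiv ℝ (v j) (emb x)).comp Lemb)) x :=
        fun x => (((hv j) (emb x)).hasFDerivAt.comp x (hembL x)).neg
      have hzero : ∀ x : ℝ × ℝ,
          ((fderiv ℝ (v k) (emb x)).comp Lemb) (1, 0) +
            (-((fderiv ℝ (v j) (emb x)).comp Lemb)) (0, 1) = 0 := by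
        intro x
        simp only [ContinuousLinearMap.comp_apply, ContinuousLinearMap.neg_apply, hL10, hL01]
        rw [hsym (emb x) j k]
        ring
      have hcont1 : ∀ t₀ : ℝ, Continuous (fun u : ℝ => v j (emb (u, t₀))) := fun t₀ =>
        (hvc j).comp (hembc.comp (continuous_id.prodMk continuous_const))
      have green : ∀ s : ℝ,
          (∫ t in (0:ℝ)..(y k), v k (emb (s, t))) =
            (∫ t in (0:ℝ)..(y k), v k (emb (y j, t))) +
              ∫ u in (y j)..s, (v j (emb (u, y k)) - v j (emb (u, 0))) := by
        intro s
        have hdiv := MeasureTheory.integral2_divergence_prod_of_hasFDerivAt_off_countable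
          (fun q => v k (emb q)) (fun q => -(v j (emb q)))
          (fun x => (fderiv ℝ (v k) (emb x)).comp Lemb)
          (fun x => -((fderiv ℝ (v j) (emb x)).comp Lemb))
          (y j) 0 s (y k) ∅ Set.countable_empty
          (((hvc k).comp hembc).continuousOn)
          (((hvc j).comp hembc).neg.continuousOn)
          (fun x _ => hdf x) (fun x _ => hdg x)
          (by
            have h0 : (fun x : ℝ × ℝ => ((fderiv ℝ (v k) (emb x)).comp Lemb) (1, 0) +
                (-((fderiv ℝ (v j) (emb x)).comp Lemb)) (0, 1)) = fun _ => (0 : ℝ) :=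
              funext hzero
            rw [h0]
            exact MeasureTheory.integrableOn_zero)
        simp only [hzero, intervalIntegral.integral_zero] at hdiv
        have hint1 : IntervalIntegrable (fun u => v j (emb (u, y k))) MeasureTheory.volume
            (y j) s := (hcont1 (y k)).intervalIntegrable _ _
        have hint2 : IntervalIntegrable (fun u => v j (emb (u, 0))) MeasureTheory.volume
            (y j) s := (hcont1 0).intervalIntegrable _ _
        rw [intervalIntegral.integral_sub hint1 hint2]
        rw [intervalIntegral.integral_neg, intervalIntegral.integral_neg] at hdiv
        linarith
      have hfun : I k = fun s => (∫ t in (0:ℝ)..(y k), v k (emb (y j, t))) +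
          ∫ u in (y j)..s, (v j (emb (u, y k)) - v j (emb (u, 0))) := by
        funext s
        simp only [hIeq]
        exact green s
      have hψc : Continuous (fun u : ℝ => v j (emb (u, y k)) - v j (emb (u, 0))) :=
        (hcont1 (y k)).sub (hcont1 0)
      have hd2 : HasDerivAt
          (fun s => ∫ u in (y j)..s, (v j (emb (u, y k)) - v j (emb (u, 0))))
          (v j (emb (y j, y k)) - v j (emb (y j, 0))) (y j) :=
        (hψc.integral_hasStrictDerivAt (y j) (y j)).hasDerivAt
      have hsum2 := (hasDerivAt_const (y j)
        (∫ t in (0:ℝ)..(y k), v k (emb (y j, t)))).fun_add hd2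
      rw [← hfun] at hsum2
      refine hsum2.congr_deriv ?_
      symm
      have hupd : Function.update w j (y j) = w := by
        funext i
        rcases eq_or_ne i j with rfl | hij
        · rw [Function.update_self]
          simp [hwdef, trunc, hkj]
        · rw [Function.update_of_ne hij]
      have he1 : emb (y j, y k) = trunc ((k : ℕ) + 1) y := by
        simp only [hembdef]
        rw [hupd, hwdef, update_trunc]
      have he0 : emb (y j, 0) = trunc (k : ℕ) y := by
        simp only [hembdef]
        rw [hupd]
        funext i
        rcases eq_or_ne i k with rfl | hik
        · rw [Function.update_self]
          simp [hwdef, trunc]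
        · rw [Function.update_of_ne hik]
      rw [he1, he0, hDdef]
      simp only [if_neg hne]
      have h6 : max ((k : ℕ) + 1) ((j : ℕ) + 1) = (k : ℕ) + 1 := by omega
      have h7 : max (k : ℕ) ((j : ℕ) + 1) = (k : ℕ) := by omega
      rw [h6, h7]
      simp only [hcdef]
      ring
  have hsumD : ∑ k : Fin d, D k = v j y := by
    have h1 : ∑ k : Fin d,
        (c (max ((k : ℕ) + 1) ((j : ℕ) + 1)) - c (max (k : ℕ) ((j : ℕ) + 1))) =
        c (max d ((j : ℕ) + 1)) - c (max 0 ((j : ℕ) + 1)) := by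
      rw [Fin.sum_univ_eq_sum_range (fun m => c (max (m + 1) ((j : ℕ) + 1)) -
        c (max m ((j : ℕ) + 1))) d]
      exact Finset.sum_range_sub (fun m => c (max m ((j : ℕ) + 1))) d
    have h2 : max d ((j : ℕ) + 1) = d := by have := j.isLt; omega
    have h3 : max 0 ((j : ℕ) + 1) = (j : ℕ) + 1 := by omega
    have h4 : ∑ k : Fin d, (if k = j then c ((j : ℕ) + 1) else 0) = c ((j : ℕ) + 1) := by
      rw [Finset.sum_ite_eq' Finset.univ j (fun _ => c ((j : ℕ) + 1))]
      simp
    rw [hDdef]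
    rw [Finset.sum_add_distrib, h1, h4, h2, h3]
    simp [hcdef, trunc_self]
  have := HasDerivAt.fun_sum (fun k (_ : k ∈ Finset.univ) => key k)
  rw [← hFI] at this
  rwa [hsumD] at this


lemma sumProj_apply {d : ℕ} (coeffs : Fin d → ℝ) (w : Fin d → ℝ) :
    (∑ j, coeffs j • (ContinuousLinearMap.proj j : ((Fin d → ℝ) →L[ℝ] ℝ))) w
      = ∑ j, coeffs j * w j := by
  rw [ContinuousLinearMap.sum_apply]
  exact Finset.sum_congr rfl fun j _ => by
    rw [ContinuousLinearMap.smul_apply, ContinuousLinearMap.proj_apply, smul_eq_mul]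

lemma sumProj_single {d : ℕ} (coeffs : Fin d → ℝ) (i : Fin d) :
    (∑ j, coeffs j • (ContinuousLinearMap.proj j : ((Fin d → ℝ) →L[ℝ] ℝ)))
      (Pi.single i 1) = coeffs i := by
  rw [sumProj_apply, Finset.sum_eq_single i]
  · rw [Pi.single_eq_same, mul_one]
  · intro b _ hb
    rw [Pi.single_eq_of_ne hb, mul_zero]
  · intro h; exact absurd (Finset.mem_univ i) h

lemma diff_det {d : ℕ} (f : (Fin d → ℝ) → Matrix (Fin d) (Fin d) ℝ)
    (h : ∀ i j, Differentiable ℝ fun y => f y i j) :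
    Differentiable ℝ fun y => (f y).det := by
  have hrw : (fun y => (f y).det) = fun y => ∑ τ : Equiv.Perm (Fin d),
      ((Equiv.Perm.sign τ : ℤ) : ℝ) * ∏ i, f y (τ i) i := by
    funext y; rw [Matrix.det_apply']
  rw [hrw]
  apply Differentiable.fun_sum
  intro τ _
  apply Differentiable.const_mul
  intro y
  exact (HasFDerivAt.finset_prod (fun i _ => ((h (τ i) i) y).hasFDerivAt)).differentiableAt

lemma diff_inv_entry {d : ℕ} (σ : (Fin d → ℝ) → Matrix (Fin d) (Fin d) ℝ)
    (hσ : ∀ i j, Differentiable ℝ fun y => σ y i j)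
    (hdet : ∀ y, (σ y).det ≠ 0) (i j : Fin d) :
    Differentiable ℝ fun y => (σ y)⁻¹ i j := by
  have h1 : (fun y => (σ y)⁻¹ i j) = fun y => ((σ y).det)⁻¹ * (σ y).adjugate i j := by
    funext y
    rw [Matrix.inv_def, Matrix.smul_apply, smul_eq_mul, Ring.inverse_eq_inv]
  rw [h1]
  apply Differentiable.mul
  · exact (diff_det σ hσ).inv hdet
  · have h2 : (fun y => (σ y).adjugate i j)
        = fun y => ((σ y).updateRow j (Pi.single i 1)).det := by
      funext y; rw [Matrix.adjugate_apply]
    rw [h2]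
    apply diff_det
    intro a b
    by_cases haj : a = j
    · subst haj
      simp only [Matrix.updateRow_apply, if_pos rfl]
      exact differentiable_const _
    · simp only [Matrix.updateRow_apply, if_neg haj]
      exact hσ a b

end CurlAux
/-- necessity direction of Lemma 1 (iv): if `σ : ℝ^d → ℝ^{d×d}` is
differentiable, `σ(y)` is symmetric positive definite for every `y`, and `σ` satisfies
the curl condition, then there exists a convex differentiable function `φ : ℝ^d → ℝ`
whose gradient `∇φ` is differentiable everywhere with Jacobian `D(∇φ)(y) = σ(y)⁻¹`
for all `y`; that is, `σ⁻¹` is the Hessian of a convex function. -/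
theorem inv_hessian_of_curl_condition (d : ℕ) (hd : 1 ≤ d)
    (σ : (Fin d → ℝ) → Matrix (Fin d) (Fin d) ℝ)
    (hσ_diff : ∀ i j, Differentiable ℝ fun y => σ y i j)
    (hσ_pd : ∀ y, (σ y).PosDef)
    (hcurl : CurlCondition σ) :
    ∃ (φ : (Fin d → ℝ) → ℝ) (gradφ : (Fin d → ℝ) → Fin d → ℝ),
      ConvexOn ℝ Set.univ φ ∧
      Differentiable ℝ φ ∧
      (∀ y i, gradφ y i = fderiv ℝ φ y (Pi.single i 1)) ∧
      Differentiable ℝ gradφ ∧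
      (∀ y i j, fderiv ℝ (fun y => gradφ y i) y (Pi.single j 1) = (σ y)⁻¹ i j) := by
  classical
  have hdet : ∀ y, (σ y).det ≠ 0 := fun y => (hσ_pd y).det_pos.ne'
  have hunit : ∀ y, IsUnit (σ y).det := fun y => (hdet y).isUnit
  have hAdiff : ∀ i j, Differentiable ℝ fun y => (σ y)⁻¹ i j :=
    fun i j => CurlAux.diff_inv_entry σ hσ_diff hdet i j
  have hAsymm : ∀ (y : Fin d → ℝ) (i j : Fin d), (σ y)⁻¹ i j = (σ y)⁻¹ j i := by
    intro y i j
    have h := ((hσ_pd y).inv).1.apply i j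
    rw [star_trivial] at h
    exact h.symm
  -- the derivative matrix of the inverse
  have hDAfact : ∀ (y : Fin d → ℝ) (k : Fin d),
      (Matrix.of fun a b => fderiv ℝ (fun y' => (σ y')⁻¹ a b) y (Pi.single k 1))
        = -((σ y)⁻¹ * (matPartialDeriv σ y k * (σ y)⁻¹)) := by
    intro y k
    have hmain : ∀ i j : Fin d,
        (∑ l, σ y i l * fderiv ℝ (fun y' => (σ y')⁻¹ l j) y (Pi.single k 1))
          = -(∑ l, fderiv ℝ (fun y' => σ y' i l) y (Pi.single k 1) * (σ y)⁻¹ l j) := by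
      intro i j
      have hconst : (fun y' => ∑ l, σ y' i l * (σ y')⁻¹ l j)
          = fun _ => (1 : Matrix (Fin d) (Fin d) ℝ) i j := by
        funext y'
        have h1 : σ y' * (σ y')⁻¹ = 1 := Matrix.mul_nonsing_inv (σ y') (hunit y')
        calc ∑ l, σ y' i l * (σ y')⁻¹ l j = (σ y' * (σ y')⁻¹) i j :=
              (Matrix.mul_apply).symm
          _ = (1 : Matrix (Fin d) (Fin d) ℝ) i j := by rw [h1]
      have hfd : HasFDerivAt (fun y' => ∑ l, σ y' i l * (σ y')⁻¹ l j)
          (∑ l, (σ y i l • fderiv ℝ (fun y' => (σ y')⁻¹ l j) y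
            + (σ y)⁻¹ l j • fderiv ℝ (fun y' => σ y' i l) y)) y := by
        apply HasFDerivAt.fun_sum
        intro l _
        exact ((hσ_diff i l) y).hasFDerivAt.mul ((hAdiff l j) y).hasFDerivAt
      have hzero : (∑ l, (σ y i l • fderiv ℝ (fun y' => (σ y')⁻¹ l j) y
            + (σ y)⁻¹ l j • fderiv ℝ (fun y' => σ y' i l) y))
          = (0 : (Fin d → ℝ) →L[ℝ] ℝ) := by
        have h2 : HasFDerivAt (fun y' => ∑ l, σ y' i l * (σ y')⁻¹ l j)
            (0 : (Fin d → ℝ) →L[ℝ] ℝ) y := by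
          rw [hconst]; exact hasFDerivAt_const _ _
        exact hfd.unique h2
      have h3 := congrArg (fun (L : (Fin d → ℝ) →L[ℝ] ℝ) => L (Pi.single k 1)) hzero
      simp only [ContinuousLinearMap.sum_apply, ContinuousLinearMap.add_apply,
        ContinuousLinearMap.smul_apply, smul_eq_mul, ContinuousLinearMap.zero_apply] at h3
      rw [Finset.sum_add_distrib] at h3
      have h4 : ∑ l, (σ y)⁻¹ l j * fderiv ℝ (fun y' => σ y' i l) y (Pi.single k 1)
          = ∑ l, fderiv ℝ (fun y' => σ y' i l) y (Pi.single k 1) * (σ y)⁻¹ l j :=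
        Finset.sum_congr rfl fun l _ => mul_comm _ _
      linarith [h3, h4.symm]
    have hmul : σ y * (Matrix.of fun a b => fderiv ℝ (fun y' => (σ y')⁻¹ a b) y
        (Pi.single k 1)) = -(matPartialDeriv σ y k * (σ y)⁻¹) := by
      ext i j
      rw [Matrix.mul_apply, Matrix.neg_apply, Matrix.mul_apply]
      have h5 := hmain i j
      calc ∑ l, σ y i l * (Matrix.of fun a b =>
            fderiv ℝ (fun y' => (σ y')⁻¹ a b) y (Pi.single k 1)) l j
          = ∑ l, σ y i l * fderiv ℝ (fun y' => (σ y')⁻¹ l j) y (Pi.single k 1) := rfl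
        _ = -(∑ l, fderiv ℝ (fun y' => σ y' i l) y (Pi.single k 1) * (σ y)⁻¹ l j) := h5
        _ = -∑ l, matPartialDeriv σ y k i l * (σ y)⁻¹ l j := rfl
    calc (Matrix.of fun a b => fderiv ℝ (fun y' => (σ y')⁻¹ a b) y (Pi.single k 1))
        = 1 * (Matrix.of fun a b => fderiv ℝ (fun y' => (σ y')⁻¹ a b) y (Pi.single k 1)) :=
          (one_mul _).symm
      _ = ((σ y)⁻¹ * σ y) * (Matrix.of fun a b =>
            fderiv ℝ (fun y' => (σ y')⁻¹ a b) y (Pi.single k 1)) := by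
          rw [Matrix.nonsing_inv_mul (σ y) (hunit y)]
      _ = (σ y)⁻¹ * (σ y * (Matrix.of fun a b =>
            fderiv ℝ (fun y' => (σ y')⁻¹ a b) y (Pi.single k 1))) := Matrix.mul_assoc _ _ _
      _ = (σ y)⁻¹ * -(matPartialDeriv σ y k * (σ y)⁻¹) := by rw [hmul]
      _ = -((σ y)⁻¹ * (matPartialDeriv σ y k * (σ y)⁻¹)) := by rw [mul_neg]
  -- symmetry of the partial derivatives of the inverse
  have hAsym' : ∀ (i : Fin d) (y : Fin d → ℝ) (j k : Fin d),
      fderiv ℝ (fun y' => (σ y')⁻¹ i j) y (Pi.single k 1)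
        = fderiv ℝ (fun y' => (σ y')⁻¹ i k) y (Pi.single j 1) := by
    intro i y j k
    have e1 : ∀ (k j : Fin d), fderiv ℝ (fun y' => (σ y')⁻¹ i j) y (Pi.single k 1)
        = (-((σ y)⁻¹) *ᵥ ((matPartialDeriv σ y k * (σ y)⁻¹) *ᵥ Pi.single j 1)) i := by
      intro k j
      have h3 : fderiv ℝ (fun y' => (σ y')⁻¹ i j) y (Pi.single k 1)
          = (Matrix.of fun a b => fderiv ℝ (fun y' => (σ y')⁻¹ a b) y (Pi.single k 1)) i j :=
        rfl
      rw [h3, hDAfact y k]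
      rw [Matrix.mulVec_mulVec, Matrix.mulVec_single_one, Matrix.col_apply,
        Matrix.neg_mul]
    rw [e1 k j, e1 j k, hcurl y j k]
  -- the gradient field
  set g : (Fin d → ℝ) → Fin d → ℝ :=
    fun y i => CurlAux.pot (fun j y' => (σ y')⁻¹ i j) y with hgdef
  have hgD : ∀ (i : Fin d) (y : Fin d → ℝ), HasFDerivAt (fun y' => g y' i)
      (∑ j, (σ y)⁻¹ i j • (ContinuousLinearMap.proj j : ((Fin d → ℝ) →L[ℝ] ℝ))) y := by
    intro i y
    exact CurlAux.exists_potential (fun j y' => (σ y')⁻¹ i j)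
      (fun j => hAdiff i j) (fun y' j k => hAsym' i y' j k) y
  have hgsym : ∀ (y : Fin d → ℝ) (i k : Fin d),
      fderiv ℝ (fun y' => g y' i) y (Pi.single k 1)
        = fderiv ℝ (fun y' => g y' k) y (Pi.single i 1) := by
    intro y i k
    rw [(hgD i y).fderiv, (hgD k y).fderiv, CurlAux.sumProj_single, CurlAux.sumProj_single]
    exact hAsymm y i k
  set φ : (Fin d → ℝ) → ℝ := CurlAux.pot (fun i y' => g y' i) with hφdef
  have hφD : ∀ y : Fin d → ℝ, HasFDerivAt φ
      (∑ i, g y i • (ContinuousLinearMap.proj i : ((Fin d → ℝ) →L[ℝ] ℝ))) y := by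
    intro y
    exact CurlAux.exists_potential (fun i y' => g y' i)
      (fun i y' => (hgD i y').differentiableAt) hgsym y
  -- support inequality
  have hsupp : ∀ x z : Fin d → ℝ, φ x + (∑ i, g x i * (z i - x i)) ≤ φ z := by
    intro x z
    set ℓ : ℝ → (Fin d → ℝ) := fun t => x + t • (z - x) with hℓdef
    have hℓ0 : ℓ 0 = x := by simp [hℓdef]
    have hℓ1 : ℓ 1 = z := by simp [hℓdef]
    have hℓd : ∀ t : ℝ, HasDerivAt ℓ (z - x) t := by
      intro t
      have h1 := ((hasDerivAt_id t).smul_const (z - x)).const_add x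
      simpa [hℓdef] using h1
    set r : ℝ → ℝ := fun t => ∑ i, g (ℓ t) i * (z i - x i) with hrdef
    have hτd : ∀ t : ℝ, HasDerivAt (fun t => φ (ℓ t)) (r t) t := by
      intro t
      have h1 := (hφD (ℓ t)).comp_hasDerivAt t (hℓd t)
      refine h1.congr_deriv ?_
      symm
      rw [hrdef, CurlAux.sumProj_apply]
      exact Finset.sum_congr rfl fun i _ => by rw [Pi.sub_apply]
    have hrd : ∀ t : ℝ, HasDerivAt r
        (∑ i, (∑ j, (σ (ℓ t))⁻¹ i j * (z j - x j)) * (z i - x i)) t := by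
      intro t
      apply HasDerivAt.fun_sum
      intro i _
      have h2 := (hgD i (ℓ t)).comp_hasDerivAt t (hℓd t)
      have h3 : (∑ j, (σ (ℓ t))⁻¹ i j •
            (ContinuousLinearMap.proj j : ((Fin d → ℝ) →L[ℝ] ℝ))) (z - x)
          = ∑ j, (σ (ℓ t))⁻¹ i j * (z j - x j) := by
        rw [CurlAux.sumProj_apply]
        exact Finset.sum_congr rfl fun jj _ => by rw [Pi.sub_apply]
      rw [h3] at h2
      exact h2.mul_const (z i - x i)
    have hrnonneg : ∀ t : ℝ,
        0 ≤ ∑ i, (∑ j, (σ (ℓ t))⁻¹ i j * (z j - x j)) * (z i - x i) := by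
      intro t
      have hps := ((hσ_pd (ℓ t)).inv).posSemidef.dotProduct_mulVec_nonneg (fun i => z i - x i)
      have heq : (star (fun i => z i - x i) ⬝ᵥ ((σ (ℓ t))⁻¹ *ᵥ fun i => z i - x i))
          = ∑ i, (∑ j, (σ (ℓ t))⁻¹ i j * (z j - x j)) * (z i - x i) := by
        unfold dotProduct Matrix.mulVec dotProduct
        exact Finset.sum_congr rfl fun i _ => by
          rw [Pi.star_apply, star_trivial]; ring
      rw [heq] at hps
      exact hps
    have hrmono : Monotone r := by
      apply monotone_of_deriv_nonneg
      · intro t; exact (hrd t).differentiableAt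
      · intro t; rw [(hrd t).deriv]; exact hrnonneg t
    have hcont : ContinuousOn (fun t => φ (ℓ t)) (Set.Icc (0:ℝ) 1) :=
      (continuous_iff_continuousAt.mpr
        (fun t => (hτd t).differentiableAt.continuousAt)).continuousOn
    obtain ⟨ξ, hξ, hslope⟩ := exists_hasDerivAt_eq_slope (fun t => φ (ℓ t)) r
      (zero_lt_one) hcont (fun t _ => hτd t)
    have h6 : r ξ = φ z - φ x := by
      rw [hslope, hℓ0, hℓ1]
      simp
    have h7 : r 0 ≤ r ξ := hrmono hξ.1.le
    have h8 : r 0 = ∑ i, g x i * (z i - x i) := by rw [hrdef]; simp only [hℓ0]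
    linarith
  -- convexity
  have hconv : ConvexOn ℝ Set.univ φ := by
    refine ⟨convex_univ, ?_⟩
    intro x _ z _ a b ha hb hab
    set m := a • x + b • z with hmdef
    have h1 := hsupp m x
    have h2 := hsupp m z
    have hcomb : a * (∑ i, g m i * (x i - m i)) + b * (∑ i, g m i * (z i - m i)) = 0 := by
      rw [Finset.mul_sum, Finset.mul_sum, ← Finset.sum_add_distrib]
      apply Finset.sum_eq_zero
      intro i _
      have hm : m i = a * x i + b * z i := by
        simp [hmdef, Pi.add_apply, Pi.smul_apply, smul_eq_mul]
      calc a * (g m i * (x i - m i)) + b * (g m i * (z i - m i))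
          = g m i * ((a * x i + b * z i) - (a + b) * m i) := by ring
        _ = 0 := by rw [hab, hm]; ring
    have h1' := mul_le_mul_of_nonneg_left h1 ha
    have h2' := mul_le_mul_of_nonneg_left h2 hb
    have hm1 : a * φ m + b * φ m = φ m := by rw [← add_mul, hab, one_mul]
    simp only [smul_eq_mul]
    nlinarith [h1', h2', hcomb, hm1]
  refine ⟨φ, g, hconv, fun y => (hφD y).differentiableAt, ?_, ?_, ?_⟩
  · intro y i
    rw [(hφD y).fderiv, CurlAux.sumProj_single]
  · exact differentiable_pi.mpr (fun i y => (hgD i y).differentiableAt)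
  · intro y i j
    rw [(hgD i y).fderiv, CurlAux.sumProj_single]
end

section
/- Let d ≥ 1 and let σ : ℝ^d → ℝ^{d×d} be continuously differentiable with σ(y) invertible for every y ∈ ℝ^d, and suppose σ satisfies the curl condition. Then there exists a continuously differentiable map g : ℝ^d → ℝ^d whose Jacobian matrix satisfies Dg(y) = σ(y)^{-1} for every y ∈ ℝ^d. -/
open Matrix

open MeasureTheory intervalIntegral

lemma contDiff_det {d : ℕ} {M : (Fin d → ℝ) → Matrix (Fin d) (Fin d) ℝ}
    (hM : ∀ i j, ContDiff ℝ 1 fun y => M y i j) :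
    ContDiff ℝ 1 fun y => (M y).det := by
  have : (fun y => (M y).det)
      = fun y => ∑ τ : Equiv.Perm (Fin d), ((Equiv.Perm.sign τ : ℤ) : ℝ) * ∏ i, M y (τ i) i := by
    funext y; rw [Matrix.det_apply]; apply Finset.sum_congr rfl; intro τ _; simp [Units.smul_def, zsmul_eq_mul]
  rw [this]
  exact ContDiff.sum fun τ _ =>
    (contDiff_const.mul (contDiff_prod fun i _ => hM (τ i) i))

lemma contDiff_inv_entries {d : ℕ} {σ : (Fin d → ℝ) → Matrix (Fin d) (Fin d) ℝ}
    (hσ_c1 : ∀ i j, ContDiff ℝ 1 fun y => σ y i j)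
    (hσ_inv : ∀ y, IsUnit (σ y)) :
    ∀ i j, ContDiff ℝ 1 fun y => (σ y)⁻¹ i j := by
  intro i j
  have hdet : ∀ y, (σ y).det ≠ 0 := fun y =>
    (Matrix.isUnit_iff_isUnit_det (σ y)).1 (hσ_inv y) |>.ne_zero
  have hadj : ContDiff ℝ 1 fun y => (σ y).adjugate i j := by
    have : (fun y => (σ y).adjugate i j)
        = fun y => ((σ y).updateRow j (Pi.single i 1)).det := by
      funext y; rw [Matrix.adjugate_apply]
    rw [this]
    apply contDiff_det
    intro a b
    rcases eq_or_ne a j with rfl | h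
    · simpa using contDiff_const
    · simp only [Matrix.updateRow_apply, if_neg h]
      exact hσ_c1 a b
  have : (fun y => (σ y)⁻¹ i j) = fun y => ((σ y).det)⁻¹ * (σ y).adjugate i j := by
    funext y
    rw [Matrix.inv_def]
    simp [Ring.inverse_eq_inv']
  rw [this]
  rw [contDiff_iff_contDiffAt]
  intro y
  exact (((contDiff_det hσ_c1).contDiffAt).inv (hdet y)).mul hadj.contDiffAt

lemma inv_partial_eq {d : ℕ} {σ : (Fin d → ℝ) → Matrix (Fin d) (Fin d) ℝ}
    (hσ_c1 : ∀ i j, ContDiff ℝ 1 fun y => σ y i j)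
    (hσ_inv : ∀ y, IsUnit (σ y)) (y : Fin d → ℝ) (k : Fin d) :
    (Matrix.of fun i l => fderiv ℝ (fun y => (σ y)⁻¹ i l) y (Pi.single k 1))
      = -((σ y)⁻¹ * (matPartialDeriv σ y k * (σ y)⁻¹)) := by
  have hG := contDiff_inv_entries hσ_c1 hσ_inv
  have hdet : ∀ y, IsUnit (σ y).det := fun y => (Matrix.isUnit_iff_isUnit_det (σ y)).1 (hσ_inv y)
  have hDG : ∀ i l, DifferentiableAt ℝ (fun y => (σ y)⁻¹ i l) y :=
    fun i l => ((hG i l).differentiable one_ne_zero).differentiableAt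
  have hDσ : ∀ l j, DifferentiableAt ℝ (fun y => σ y l j) y :=
    fun l j => ((hσ_c1 l j).differentiable one_ne_zero).differentiableAt
  have hent : ∀ i j, ∑ l, ((σ y)⁻¹ i l * (matPartialDeriv σ y k l j)
      + σ y l j * fderiv ℝ (fun y => (σ y)⁻¹ i l) y (Pi.single k 1)) = 0 := by
    intro i j
    have hconst : fderiv ℝ (fun y => ∑ l, (σ y)⁻¹ i l * σ y l j) y = 0 := by
      have : (fun y => ∑ l, (σ y)⁻¹ i l * σ y l j)
          = fun _ => (1 : Matrix (Fin d) (Fin d) ℝ) i j := by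
        funext z
        rw [← Matrix.mul_apply, Matrix.nonsing_inv_mul _ (hdet z)]
      rw [this]; exact fderiv_const_apply _
    have hsum : fderiv ℝ (fun y => ∑ l, (σ y)⁻¹ i l * σ y l j) y
        = ∑ l, fderiv ℝ (fun y => (σ y)⁻¹ i l * σ y l j) y :=
      fderiv_fun_sum fun l _ => (hDG i l).mul (hDσ l j)
    have happ : (0 : (Fin d → ℝ) →L[ℝ] ℝ) (Pi.single k 1)
        = (∑ l, fderiv ℝ (fun y => (σ y)⁻¹ i l * σ y l j) y) (Pi.single k 1) := by
      rw [← hsum, hconst]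
    simp only [ContinuousLinearMap.zero_apply, ContinuousLinearMap.sum_apply] at happ
    rw [← happ.symm]
    apply Finset.sum_congr rfl
    intro l _
    rw [fderiv_fun_mul (hDG i l) (hDσ l j)]
    simp [matPartialDeriv, mul_comm]
  have hmul : (Matrix.of fun i l => fderiv ℝ (fun y => (σ y)⁻¹ i l) y (Pi.single k 1)) * σ y
      = -((σ y)⁻¹ * matPartialDeriv σ y k) := by
    ext i j
    rw [Matrix.mul_apply, Matrix.neg_apply, Matrix.mul_apply]
    have := hent i j
    rw [Finset.sum_add_distrib] at this
    have h2 := eq_neg_of_add_eq_zero_right this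
    calc ∑ l, (Matrix.of fun i l => fderiv ℝ (fun y => (σ y)⁻¹ i l) y (Pi.single k 1)) i l * σ y l j
        = ∑ l, σ y l j * fderiv ℝ (fun y => (σ y)⁻¹ i l) y (Pi.single k 1) := by
          apply Finset.sum_congr rfl; intro l _; rw [Matrix.of_apply, mul_comm]
      _ = -∑ l, (σ y)⁻¹ i l * matPartialDeriv σ y k l j := h2
  calc (Matrix.of fun i l => fderiv ℝ (fun y => (σ y)⁻¹ i l) y (Pi.single k 1))
      = (Matrix.of fun i l => fderiv ℝ (fun y => (σ y)⁻¹ i l) y (Pi.single k 1)) * (σ y * (σ y)⁻¹) := by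
        rw [Matrix.mul_nonsing_inv _ (hdet y), Matrix.mul_one]
    _ = ((Matrix.of fun i l => fderiv ℝ (fun y => (σ y)⁻¹ i l) y (Pi.single k 1)) * σ y) * (σ y)⁻¹ := by
        rw [Matrix.mul_assoc]
    _ = -((σ y)⁻¹ * (matPartialDeriv σ y k * (σ y)⁻¹)) := by
        rw [hmul, Matrix.neg_mul, Matrix.mul_assoc]

lemma inv_partial_symm {d : ℕ} {σ : (Fin d → ℝ) → Matrix (Fin d) (Fin d) ℝ}
    (hσ_c1 : ∀ i j, ContDiff ℝ 1 fun y => σ y i j)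
    (hσ_inv : ∀ y, IsUnit (σ y)) (hcurl : CurlCondition σ)
    (y : Fin d → ℝ) (i j k : Fin d) :
    fderiv ℝ (fun y => (σ y)⁻¹ i j) y (Pi.single k 1)
      = fderiv ℝ (fun y => (σ y)⁻¹ i k) y (Pi.single j 1) := by
  have h1 := congrFun (congrFun (congrArg (fun M : Matrix (Fin d) (Fin d) ℝ => (M : Matrix _ _ ℝ))
    (inv_partial_eq hσ_c1 hσ_inv y k)) i) j
  have h2 := congrFun (congrFun (congrArg (fun M : Matrix (Fin d) (Fin d) ℝ => (M : Matrix _ _ ℝ))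
    (inv_partial_eq hσ_c1 hσ_inv y j)) i) k
  simp only [Matrix.of_apply] at h1 h2
  rw [h1, h2]
  have hc : ∀ m, (matPartialDeriv σ y k * (σ y)⁻¹) m j
      = (matPartialDeriv σ y j * (σ y)⁻¹) m k := by
    intro m
    have := congrFun (hcurl y j k) m
    simpa [Matrix.mulVec_single] using this
  show (-((σ y)⁻¹ * (matPartialDeriv σ y k * (σ y)⁻¹))) i j
      = (-((σ y)⁻¹ * (matPartialDeriv σ y j * (σ y)⁻¹))) i k
  rw [Matrix.neg_apply, Matrix.neg_apply, Matrix.mul_apply, Matrix.mul_apply]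
  congr 1
  apply Finset.sum_congr rfl
  intro m _
  rw [hc m]

variable {d : ℕ}

noncomputable def dotCLM (w : Fin d → ℝ) : (Fin d → ℝ) →L[ℝ] ℝ :=
  ∑ j, w j • ContinuousLinearMap.proj j

lemma dotCLM_apply (w v : Fin d → ℝ) : dotCLM w v = ∑ j, w j * v j := by
  simp [dotCLM, ContinuousLinearMap.sum_apply]

lemma clm_expand (L : (Fin d → ℝ) →L[ℝ] ℝ) (w : Fin d → ℝ) :
    L w = ∑ k, w k * L (Pi.single k 1) := by
  conv_lhs => rw [← Finset.univ_sum_single w]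
  rw [map_sum]
  apply Finset.sum_congr rfl
  intro k _
  have h : Pi.single k (w k) = w k • (Pi.single k 1 : Fin d → ℝ) := by
    ext m; by_cases h : m = k <;> simp [Pi.single_apply, h]
  rw [h, ContinuousLinearMap.map_smul, smul_eq_mul]

set_option maxHeartbeats 2000000 in
lemma poincare (f : (Fin d → ℝ) → (Fin d → ℝ))
    (hf : ∀ j, ContDiff ℝ 1 fun y => f y j)
    (hsym : ∀ y j k, fderiv ℝ (fun y => f y j) y (Pi.single k 1)
      = fderiv ℝ (fun y => f y k) y (Pi.single j 1)) :
    ∀ y₀ : Fin d → ℝ, HasFDerivAt (fun y => ∫ t in (0:ℝ)..1, ∑ j, f (t • y) j * y j)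
      (dotCLM (f y₀)) y₀ := by
  intro y₀
  have hdiff : ∀ j, Differentiable ℝ fun y => f y j :=
    fun j => (hf j).differentiable one_ne_zero
  have hfc : Continuous f := continuous_pi fun j => (hf j).continuous
  have hdfc : ∀ j, Continuous (fderiv ℝ fun y => f y j) :=
    fun j => (contDiff_one_iff_fderiv.1 (hf j)).2
  set F' : (Fin d → ℝ) → ℝ → ((Fin d → ℝ) →L[ℝ] ℝ) := fun x t =>
    ∑ j, (f (t • x) j • ContinuousLinearMap.proj j
      + x j • (t • fderiv ℝ (fun z => f z j) (t • x))) with hF'def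
  have hsmul : ∀ x : Fin d → ℝ, Continuous fun t : ℝ => t • x :=
    fun x => continuous_id.smul continuous_const
  have hderivx : ∀ (t : ℝ) (x : Fin d → ℝ),
      HasFDerivAt (fun x => ∑ j, f (t • x) j * x j) (F' x t) x := by
    intro t x
    apply HasFDerivAt.fun_sum
    intro j _
    have h1 : HasFDerivAt (fun x : Fin d → ℝ => t • x)
        (t • ContinuousLinearMap.id ℝ (Fin d → ℝ)) x := (hasFDerivAt_id x).const_smul t
    have h2 : HasFDerivAt (fun z => f z j) (fderiv ℝ (fun z => f z j) (t • x)) (t • x) :=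
      (hdiff j (t • x)).hasFDerivAt
    have hp : HasFDerivAt (fun x => f (t • x) j)
        (t • fderiv ℝ (fun z => f z j) (t • x)) x := by
      have h3 := h2.comp x h1
      refine h3.congr_fderiv ?_
      ext v
      simp [mul_comm]
    exact hp.mul (hasFDerivAt_apply j x)
  set R : ℝ := ‖y₀‖ + 1 with hRdef
  have hR0 : 0 < R := by positivity
  set K : Set (Fin d → ℝ) := Metric.closedBall 0 R with hKdef
  have hBc : Continuous fun z => ‖f z‖ + ∑ j, ‖fderiv ℝ (fun y => f y j) z‖ :=
    (hfc.norm).add (continuous_finset_sum _ fun j _ => (hdfc j).norm)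
  obtain ⟨C, hC⟩ := (isCompact_closedBall (0 : Fin d → ℝ) R).exists_bound_of_continuousOn
    hBc.continuousOn
  have hfK : ∀ z ∈ K, ‖f z‖ ≤ C := by
    intro z hz
    have h0 : (0:ℝ) ≤ ∑ j, ‖fderiv ℝ (fun y => f y j) z‖ :=
      Finset.sum_nonneg fun j _ => norm_nonneg _
    have := le_trans (le_abs_self _) (hC z hz)
    linarith
  have hdfK : ∀ j, ∀ z ∈ K, ‖fderiv ℝ (fun y => f y j) z‖ ≤ C := by
    intro j z hz
    have h1 : ‖fderiv ℝ (fun y => f y j) z‖ ≤ ∑ j, ‖fderiv ℝ (fun y => f y j) z‖ :=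
      Finset.single_le_sum (f := fun j => ‖fderiv ℝ (fun y => f y j) z‖)
        (fun j _ => norm_nonneg _) (Finset.mem_univ j)
    have h2 : (0:ℝ) ≤ ‖f z‖ := norm_nonneg _
    have := le_trans (le_abs_self _) (hC z hz)
    linarith
  have hC0 : 0 ≤ C := le_trans (norm_nonneg _) (hfK 0 (Metric.mem_closedBall_self hR0.le))
  have hxball : ∀ x ∈ Metric.ball y₀ 1, ‖x‖ ≤ R := by
    intro x hx
    have h := mem_ball_iff_norm.1 hx
    calc ‖x‖ = ‖y₀ + (x - y₀)‖ := by ring_nf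
      _ ≤ ‖y₀‖ + ‖x - y₀‖ := norm_add_le _ _
      _ ≤ ‖y₀‖ + 1 := by linarith
  have hmemK : ∀ (t : ℝ), |t| ≤ 1 → ∀ x ∈ Metric.ball y₀ 1, t • x ∈ K := by
    intro t ht x hx
    rw [hKdef, Metric.mem_closedBall, dist_zero_right, norm_smul]
    calc ‖t‖ * ‖x‖ ≤ 1 * R :=
        mul_le_mul ht (hxball x hx) (norm_nonneg _) zero_le_one
      _ = R := one_mul R
  have hproj : ∀ j : Fin d, ‖(ContinuousLinearMap.proj j : (Fin d → ℝ) →L[ℝ] ℝ)‖ ≤ 1 := by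
    intro j
    apply ContinuousLinearMap.opNorm_le_bound _ zero_le_one
    intro v
    rw [one_mul]
    exact norm_le_pi_norm v j
  have main := intervalIntegral.hasFDerivAt_integral_of_dominated_of_fderiv_le
    (F := fun x t => ∑ j, f (t • x) j * x j) (F' := F') (x₀ := y₀)
    (a := (0:ℝ)) (b := 1) (μ := volume) (bound := fun _ => (d : ℝ) * (C + R * C))
    (s := Metric.ball y₀ 1) (Metric.ball_mem_nhds y₀ one_pos)
    (Filter.Eventually.of_forall fun x =>
      (Continuous.aestronglyMeasurable (by
        apply continuous_finset_sum
        intro j _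
        exact (((continuous_apply j).comp (hfc.comp (hsmul x))).mul continuous_const))))
    (Continuous.intervalIntegrable (by
        apply continuous_finset_sum
        intro j _
        exact (((continuous_apply j).comp (hfc.comp (hsmul y₀))).mul continuous_const)) 0 1)
    (Continuous.aestronglyMeasurable (by
        apply continuous_finset_sum
        intro j _
        apply Continuous.add
        · exact ((continuous_apply j).comp (hfc.comp (hsmul y₀))).smul continuous_const
        · exact continuous_const.fun_smul
            (continuous_id.fun_smul ((hdfc j).comp (hsmul y₀)))))
    (Filter.Eventually.of_forall (fun t ht x hx => by
        have ht1 : |t| ≤ 1 := by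
          rw [Set.uIoc_of_le zero_le_one] at ht
          rw [abs_le]; exact ⟨by linarith [ht.1], ht.2⟩
        have hKmem := hmemK t ht1 x hx
        have hbnn : (0:ℝ) ≤ (d : ℝ) * (C + R * C) := by positivity
        refine ContinuousLinearMap.opNorm_le_bound _ hbnn fun v => ?_
        have hexp : F' x t v = ∑ j, (f (t • x) j * v j
            + x j * (t * fderiv ℝ (fun z => f z j) (t • x) v)) := by
          rw [hF'def]
          simp only [ContinuousLinearMap.sum_apply, ContinuousLinearMap.add_apply,
            ContinuousLinearMap.smul_apply, ContinuousLinearMap.proj_apply, smul_eq_mul]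
        rw [hexp, Real.norm_eq_abs]
        calc |∑ j, (f (t • x) j * v j + x j * (t * fderiv ℝ (fun z => f z j) (t • x) v))|
            ≤ ∑ j, |f (t • x) j * v j + x j * (t * fderiv ℝ (fun z => f z j) (t • x) v)| :=
              Finset.abs_sum_le_sum_abs _ _
          _ ≤ ∑ _j : Fin d, (C + R * C) * ‖v‖ := by
              apply Finset.sum_le_sum
              intro j _
              have h1 : |f (t • x) j| ≤ C := by
                have := norm_le_pi_norm (f (t • x)) j
                rw [Real.norm_eq_abs] at this
                exact le_trans this (hfK _ hKmem)
              have h2 : |v j| ≤ ‖v‖ := by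
                have := norm_le_pi_norm v j
                rwa [Real.norm_eq_abs] at this
              have h3 : |x j| ≤ R := by
                have := norm_le_pi_norm x j
                rw [Real.norm_eq_abs] at this
                exact le_trans this (hxball x hx)
              have h5 : |fderiv ℝ (fun z => f z j) (t • x) v| ≤ C * ‖v‖ := by
                have hop := (fderiv ℝ (fun z => f z j) (t • x)).le_opNorm v
                rw [Real.norm_eq_abs] at hop
                exact le_trans hop
                  (mul_le_mul_of_nonneg_right (hdfK j _ hKmem) (norm_nonneg v))
              calc |f (t • x) j * v j + x j * (t * fderiv ℝ (fun z => f z j) (t • x) v)|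
                  ≤ |f (t • x) j * v j|
                    + |x j * (t * fderiv ℝ (fun z => f z j) (t • x) v)| := abs_add_le _ _
                _ ≤ C * ‖v‖ + R * (1 * (C * ‖v‖)) := by
                    apply add_le_add
                    · rw [abs_mul]
                      exact mul_le_mul h1 h2 (abs_nonneg _) hC0
                    · rw [abs_mul, abs_mul]
                      refine mul_le_mul h3 ?_ (by positivity) hR0.le
                      exact mul_le_mul ht1 h5 (abs_nonneg _) zero_le_one
                _ = (C + R * C) * ‖v‖ := by ring
          _ = (d : ℝ) * (C + R * C) * ‖v‖ := by
              rw [Finset.sum_const, Finset.card_univ, Fintype.card_fin, nsmul_eq_mul]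
              ring))
    (intervalIntegrable_const)
    (Filter.Eventually.of_forall (fun t _ x _ => hderivx t x))
  have hint : (∫ t in (0:ℝ)..1, F' y₀ t) = dotCLM (f y₀) := by
    have hF'cont : Continuous (F' y₀) := by
      apply continuous_finset_sum
      intro j _
      apply Continuous.add
      · exact ((continuous_apply j).comp (hfc.comp (hsmul y₀))).smul continuous_const
      · exact continuous_const.fun_smul (continuous_id.fun_smul ((hdfc j).comp (hsmul y₀)))
    ext v
    have happly : (∫ t in (0:ℝ)..1, F' y₀ t) v = ∫ t in (0:ℝ)..1, F' y₀ t v := by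
      rw [intervalIntegral.integral_of_le zero_le_one,
        intervalIntegral.integral_of_le zero_le_one]
      exact ContinuousLinearMap.integral_apply (hF'cont.integrableOn_Ioc) v
    rw [happly, dotCLM_apply]
    have hFTC : ∀ t : ℝ, HasDerivAt (fun t : ℝ => t * ∑ j, f (t • y₀) j * v j)
        ((∑ j, f (t • y₀) j * v j)
          + t * ∑ j, fderiv ℝ (fun z => f z j) (t • y₀) y₀ * v j) t := by
      intro t
      have hS : HasDerivAt (fun t : ℝ => ∑ j, f (t • y₀) j * v j)
          (∑ j, fderiv ℝ (fun z => f z j) (t • y₀) y₀ * v j) t := by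
        apply HasDerivAt.fun_sum
        intro j _
        have hline : HasDerivAt (fun t : ℝ => t • y₀) y₀ t := by
          simpa using (hasDerivAt_id t).smul_const y₀
        exact ((hdiff j (t • y₀)).hasFDerivAt.comp_hasDerivAt t hline).mul_const (v j)
      have h := (hasDerivAt_id t).fun_mul hS
      refine h.congr_deriv ?_
      simp
    have hinteq : ∀ t : ℝ, F' y₀ t v
        = (∑ j, f (t • y₀) j * v j)
          + t * ∑ j, fderiv ℝ (fun z => f z j) (t • y₀) y₀ * v j := by
      intro t
      have hsymsum : ∑ j, y₀ j * (fderiv ℝ (fun z => f z j) (t • y₀)) v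
          = ∑ j, v j * (fderiv ℝ (fun z => f z j) (t • y₀)) y₀ := by
        calc ∑ j, y₀ j * (fderiv ℝ (fun z => f z j) (t • y₀)) v
            = ∑ j, ∑ k, y₀ j * (v k * (fderiv ℝ (fun z => f z k) (t • y₀)) (Pi.single j 1)) := by
              apply Finset.sum_congr rfl; intro j _
              rw [clm_expand (fderiv ℝ (fun z => f z j) (t • y₀)) v, Finset.mul_sum]
              apply Finset.sum_congr rfl; intro k _
              rw [hsym (t • y₀) j k]
          _ = ∑ k, ∑ j, y₀ j * (v k * (fderiv ℝ (fun z => f z k) (t • y₀)) (Pi.single j 1)) :=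
              Finset.sum_comm
          _ = ∑ k, v k * (fderiv ℝ (fun z => f z k) (t • y₀)) y₀ := by
              apply Finset.sum_congr rfl; intro k _
              rw [clm_expand (fderiv ℝ (fun z => f z k) (t • y₀)) y₀, Finset.mul_sum]
              apply Finset.sum_congr rfl; intro j _
              ring
      rw [hF'def]
      simp only [ContinuousLinearMap.sum_apply, ContinuousLinearMap.add_apply,
        ContinuousLinearMap.smul_apply, ContinuousLinearMap.proj_apply, smul_eq_mul]
      rw [Finset.sum_add_distrib]
      congr 1
      calc ∑ j, y₀ j * (t * (fderiv ℝ (fun z => f z j) (t • y₀)) v)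
          = t * ∑ j, y₀ j * (fderiv ℝ (fun z => f z j) (t • y₀)) v := by
            rw [Finset.mul_sum]; apply Finset.sum_congr rfl; intro j _; ring
        _ = t * ∑ j, v j * (fderiv ℝ (fun z => f z j) (t • y₀)) y₀ := by rw [hsymsum]
        _ = t * ∑ j, (fderiv ℝ (fun z => f z j) (t • y₀)) y₀ * v j := by
            congr 1; apply Finset.sum_congr rfl; intro j _; ring
    calc (∫ t in (0:ℝ)..1, F' y₀ t v)
        = ∫ t in (0:ℝ)..1, ((∑ j, f (t • y₀) j * v j)
            + t * ∑ j, fderiv ℝ (fun z => f z j) (t • y₀) y₀ * v j) := by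
          apply intervalIntegral.integral_congr
          intro t _
          exact hinteq t
      _ = (fun t : ℝ => t * ∑ j, f (t • y₀) j * v j) 1
          - (fun t : ℝ => t * ∑ j, f (t • y₀) j * v j) 0 := by
          apply intervalIntegral.integral_eq_sub_of_hasDerivAt (fun t _ => hFTC t)
          apply Continuous.intervalIntegrable
          apply Continuous.add
          · apply continuous_finset_sum
            intro j _
            exact ((continuous_apply j).comp (hfc.comp (hsmul y₀))).mul continuous_const
          · apply continuous_id.mul
            apply continuous_finset_sum
            intro j _
            exact ((((hdfc j).comp (hsmul y₀)).clm_apply continuous_const).mul continuous_const)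
      _ = ∑ j, f y₀ j * v j := by simp
  rw [hint] at main
  exact main

/-- Poincaré-lemma-type existence of the Lamperti transform:
if `σ : ℝ^d → ℝ^{d×d}` is continuously differentiable with `σ(y)` invertible for
every `y`, and `σ` satisfies the curl condition, then there exists a continuously
differentiable map `g : ℝ^d → ℝ^d` whose Jacobian matrix satisfies
`Dg(y) = σ(y)⁻¹` for every `y`. -/
theorem exists_lamperti_transform (d : ℕ) (hd : 1 ≤ d)
    (σ : (Fin d → ℝ) → Matrix (Fin d) (Fin d) ℝ)
    (hσ_c1 : ∀ i j, ContDiff ℝ 1 fun y => σ y i j)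
    (hσ_inv : ∀ y, IsUnit (σ y))
    (hcurl : CurlCondition σ) :
    ∃ g : (Fin d → ℝ) → (Fin d → ℝ),
      ContDiff ℝ 1 g ∧
      ∀ y i j, fderiv ℝ (fun y => g y i) y (Pi.single j 1) = (σ y)⁻¹ i j := by
  have hG := contDiff_inv_entries hσ_c1 hσ_inv
  have hgrad : ∀ i y₀, HasFDerivAt
      (fun y => ∫ t in (0:ℝ)..1, ∑ j, (σ (t • y))⁻¹ i j * y j)
      (dotCLM (fun j => (σ y₀)⁻¹ i j)) y₀ := by
    intro i
    exact poincare (fun y j => (σ y)⁻¹ i j) (fun j => hG i j)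
      (fun y j k => inv_partial_symm hσ_c1 hσ_inv hcurl y i j k)
  refine ⟨fun y i => ∫ t in (0:ℝ)..1, ∑ j, (σ (t • y))⁻¹ i j * y j, ?_, ?_⟩
  · apply contDiff_pi.2
    intro i
    apply contDiff_one_iff_fderiv.2
    constructor
    · exact fun y => (hgrad i y).differentiableAt
    · have heq : (fderiv ℝ fun y => ∫ t in (0:ℝ)..1, ∑ j, (σ (t • y))⁻¹ i j * y j)
          = fun y => dotCLM (fun j => (σ y)⁻¹ i j) :=
        funext fun y => (hgrad i y).fderiv
      rw [heq]
      show Continuous fun y => ∑ j, ((σ y)⁻¹ i j) •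
        (ContinuousLinearMap.proj j : (Fin d → ℝ) →L[ℝ] ℝ)
      exact continuous_finset_sum _ fun j _ => ((hG i j).continuous).smul continuous_const
  · intro y i j
    have := (hgrad i y).fderiv
    show (fderiv ℝ fun y => ∫ t in (0:ℝ)..1, ∑ j, (σ (t • y))⁻¹ i j * y j) y
        (Pi.single j 1) = (σ y)⁻¹ i j
    rw [this, dotCLM_apply]
    simp [Pi.single_apply]
end

section
/- Let n ≥ 1, let ν be a probability measure on ℝ^n whose characteristic function charFun(ν)(t) = ∫_{ℝ^n} exp(i⟨t, x⟩) dν(x) is nonzero for Lebesgue-almost every t ∈ ℝ^n, and let μ₁, μ₂ be finite measures on ℝ^n such that the convolutions μ₁ ∗ ν and μ₂ ∗ ν are equal. Then μ₁ = μ₂. -/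
open MeasureTheory

/-- The characteristic function `charFun(ν)(t) = ∫ exp(i⟨t,x⟩) dν(x)` of a measure `ν`
on `ℝ^n`, with `⟨t,x⟩ = ∑ i, t i * x i` the standard inner product. -/
noncomputable def charFunOfMeasure {n : ℕ} (ν : Measure (Fin n → ℝ)) (t : Fin n → ℝ) : ℂ :=
  ∫ x : Fin n → ℝ, Complex.exp (Complex.I * ((∑ i, t i * x i : ℝ) : ℂ)) ∂ν

open Complex Real
open scoped FourierTransform RealInnerProductSpace ContDiff

section Aux

variable {V : Type*} [NormedAddCommGroup V] [InnerProductSpace ℝ V]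
  [FiniteDimensional ℝ V] [MeasurableSpace V] [BorelSpace V]

/-- Characteristic function of a measure on an inner product space. -/
noncomputable def cfAux (μ : Measure V) (t : V) : ℂ :=
  ∫ x, Complex.exp ((⟪t, x⟫ : ℝ) * Complex.I) ∂μ


lemma integral_fourierInv_eq (μ : Measure V) [IsFiniteMeasure μ] {w : V → ℂ}
    (hw : Integrable w volume) :
    ∫ x, 𝓕⁻ w x ∂μ = ∫ t, cfAux μ ((2 * π) • t) * w t := by
  have hcont : Continuous fun p : V × V => Complex.exp (↑(2 * π * ⟪p.2, p.1⟫) * Complex.I) := by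
    apply Complex.continuous_exp.comp
    exact (Complex.continuous_ofReal.comp
      (continuous_const.mul (continuous_inner.comp continuous_swap))).mul continuous_const
  have hF : Integrable (fun p : V × V =>
      Complex.exp (↑(2 * π * ⟪p.2, p.1⟫) * Complex.I) * w p.2) (μ.prod volume) := by
    rw [integrable_prod_iff]
    · refine ⟨Filter.Eventually.of_forall fun x => ?_, ?_⟩
      · exact hw.bdd_mul (c := 1) (hcont.comp (Continuous.prodMk_right x)).aestronglyMeasurable
          (Filter.Eventually.of_forall fun t => by simp [Complex.norm_exp])
      · have : (fun x : V => ∫ t, ‖Complex.exp (↑(2 * π * ⟪t, x⟫) * Complex.I) * w t‖)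
            = fun _ : V => ∫ t, ‖w t‖ := by
          funext x
          congr 1
          funext t
          simp [Complex.norm_exp]
        rw [this]
        exact integrable_const _
    · exact hcont.aestronglyMeasurable.mul hw.1.comp_snd
  calc ∫ x, 𝓕⁻ w x ∂μ
      = ∫ x, ∫ t, Complex.exp (↑(2 * π * ⟪t, x⟫) * Complex.I) * w t ∂volume ∂μ := by
        congr 1; funext x
        rw [Real.fourierInv_eq']
        simp [smul_eq_mul]
    _ = ∫ t, ∫ x, Complex.exp (↑(2 * π * ⟪t, x⟫) * Complex.I) * w t ∂μ ∂volume := by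
        exact integral_integral_swap hF
    _ = ∫ t, cfAux μ ((2 * π) • t) * w t := by
        congr 1; funext t
        rw [integral_mul_const, cfAux]
        congr 1
        congr 1; funext x
        rw [real_inner_smul_left]



/-- Smooth compactly supported functions are Schwartz. -/
noncomputable def toSchwartz (f : V → ℂ) (h1 : ContDiff ℝ ∞ f) (h2 : HasCompactSupport f) :
    SchwartzMap V ℂ where
  toFun := f
  smooth' := h1
  decay' := by
    intro k m
    have hc : Continuous fun x : V => ‖x‖ ^ k * ‖iteratedFDeriv ℝ m f x‖ :=
      (continuous_norm.pow k).mul (h1.continuous_iteratedFDeriv (by exact_mod_cast le_top)).norm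
    have hs : HasCompactSupport fun x : V => ‖x‖ ^ k * ‖iteratedFDeriv ℝ m f x‖ :=
      ((h2.iteratedFDeriv m).norm).mul_left
    obtain ⟨C, hC⟩ := hc.bounded_above_of_compact_support hs
    exact ⟨C, fun x => le_trans (le_abs_self _) (hC x)⟩

theorem ext_of_cfAux (μ₁ μ₂ : Measure V) [IsFiniteMeasure μ₁] [IsFiniteMeasure μ₂]
    (h : cfAux μ₁ = cfAux μ₂) : μ₁ = μ₂ := by
  -- integrals of smooth compactly supported complex functions agree
  have key : ∀ f : V → ℂ, ContDiff ℝ ∞ f → HasCompactSupport f →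
      ∫ x, f x ∂μ₁ = ∫ x, f x ∂μ₂ := by
    intro f hf hsupp
    have hfi : Integrable f volume := hf.continuous.integrable_of_hasCompactSupport hsupp
    have hFf : Integrable (𝓕 f) volume :=
      (SchwartzMap.fourierTransformCLM ℂ (toSchwartz f hf hsupp)).integrable
    have hinv : 𝓕⁻ (𝓕 f) = f := hf.continuous.fourierInv_fourier_eq hfi hFf
    calc ∫ x, f x ∂μ₁ = ∫ x, 𝓕⁻ (𝓕 f) x ∂μ₁ := by rw [hinv]
      _ = ∫ t, cfAux μ₁ ((2 * π) • t) * 𝓕 f t := integral_fourierInv_eq μ₁ hFf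
      _ = ∫ t, cfAux μ₂ ((2 * π) • t) * 𝓕 f t := by rw [h]
      _ = ∫ x, 𝓕⁻ (𝓕 f) x ∂μ₂ := (integral_fourierInv_eq μ₂ hFf).symm
      _ = ∫ x, f x ∂μ₂ := by rw [hinv]
  have keyR : ∀ g : V → ℝ, ContDiff ℝ ∞ g → HasCompactSupport g →
      ∫ x, g x ∂μ₁ = ∫ x, g x ∂μ₂ := by
    intro g hg hgs
    have := key (fun x => ((g x : ℂ))) (Complex.ofRealCLM.contDiff.comp hg)
      (hgs.comp_left Complex.ofReal_zero)
    have hgi1 : Integrable g μ₁ := hg.continuous.integrable_of_hasCompactSupport hgs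
    have hgi2 : Integrable g μ₂ := hg.continuous.integrable_of_hasCompactSupport hgs
    have h2 : (((∫ x, g x ∂μ₁ : ℝ)) : ℂ) = ((∫ x, g x ∂μ₂ : ℝ) : ℂ) := by
      rw [← Complex.ofRealCLM_apply, ← Complex.ofRealCLM_apply,
        ← ContinuousLinearMap.integral_comp_comm Complex.ofRealCLM hgi1,
        ← ContinuousLinearMap.integral_comp_comm Complex.ofRealCLM hgi2]
      simpa using this
    exact_mod_cast h2
  set ρ : Measure V := μ₁ + μ₂ with hρ
  have hac1 : μ₁ ≪ ρ := (Measure.le_add_right le_rfl).absolutelyContinuous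
  have hac2 : μ₂ ≪ ρ := (Measure.le_add_left le_rfl).absolutelyContinuous
  have hi1 : Integrable (fun x => (μ₁.rnDeriv ρ x).toReal) ρ := Measure.integrable_toReal_rnDeriv
  have hi2 : Integrable (fun x => (μ₂.rnDeriv ρ x).toReal) ρ := Measure.integrable_toReal_rnDeriv
  have hae : ∀ᵐ x ∂ρ, (μ₁.rnDeriv ρ x).toReal = (μ₂.rnDeriv ρ x).toReal := by
    apply ae_eq_of_integral_contDiff_smul_eq hi1.locallyIntegrable hi2.locallyIntegrable
    intro g hg hgs
    have e1 : ∫ x, g x • (μ₁.rnDeriv ρ x).toReal ∂ρ = ∫ x, g x ∂μ₁ := by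
      rw [← MeasureTheory.integral_rnDeriv_smul hac1 (f := g)]
      simp_rw [smul_eq_mul, mul_comm]
    have e2 : ∫ x, g x • (μ₂.rnDeriv ρ x).toReal ∂ρ = ∫ x, g x ∂μ₂ := by
      rw [← MeasureTheory.integral_rnDeriv_smul hac2 (f := g)]
      simp_rw [smul_eq_mul, mul_comm]
    rw [e1, e2]
    exact keyR g hg hgs
  have hae2 : μ₁.rnDeriv ρ =ᵐ[ρ] μ₂.rnDeriv ρ := by
    filter_upwards [hae, Measure.rnDeriv_ne_top μ₁ ρ, Measure.rnDeriv_ne_top μ₂ ρ]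
      with x hx h1 h2
    exact (ENNReal.toReal_eq_toReal_iff' h1 h2).mp hx
  calc μ₁ = ρ.withDensity (μ₁.rnDeriv ρ) := (Measure.withDensity_rnDeriv_eq _ _ hac1).symm
    _ = ρ.withDensity (μ₂.rnDeriv ρ) := withDensity_congr_ae hae2
    _ = μ₂ := Measure.withDensity_rnDeriv_eq _ _ hac2


end Aux

section Pi


variable {n : ℕ}

lemma charFun_cont_aux (t : Fin n → ℝ) :
    Continuous fun x : Fin n → ℝ => Complex.exp (Complex.I * ((∑ i, t i * x i : ℝ) : ℂ)) := by
  apply Complex.continuous_exp.comp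
  apply continuous_const.mul
  apply Complex.continuous_ofReal.comp
  exact continuous_finset_sum _ fun i _ => continuous_const.mul (continuous_apply i)

lemma charFunOfMeasure_conv (μ ν : Measure (Fin n → ℝ)) [SFinite μ] [SFinite ν]
    (t : Fin n → ℝ) :
    charFunOfMeasure (μ.conv ν) t = charFunOfMeasure μ t * charFunOfMeasure ν t := by
  rw [charFunOfMeasure, Measure.conv,
    integral_map (by fun_prop) (charFun_cont_aux t).aestronglyMeasurable]
  have : ∀ p : (Fin n → ℝ) × (Fin n → ℝ),
      Complex.exp (Complex.I * ((∑ i, t i * (p.1 + p.2) i : ℝ) : ℂ))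
        = Complex.exp (Complex.I * ((∑ i, t i * p.1 i : ℝ) : ℂ))
          * Complex.exp (Complex.I * ((∑ i, t i * p.2 i : ℝ) : ℂ)) := by
    intro p
    rw [← Complex.exp_add, ← mul_add, ← Complex.ofReal_add, ← Finset.sum_add_distrib]
    simp [mul_add]
  simp_rw [this]
  exact integral_prod_mul (fun x : Fin n → ℝ => Complex.exp (Complex.I * ((∑ i, t i * x i : ℝ) : ℂ)))
    (fun y : Fin n → ℝ => Complex.exp (Complex.I * ((∑ i, t i * y i : ℝ) : ℂ)))

lemma charFunOfMeasure_continuous (μ : Measure (Fin n → ℝ)) [IsFiniteMeasure μ] :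
    Continuous (charFunOfMeasure μ) := by
  apply continuous_of_dominated (bound := fun _ => 1)
  · exact fun t => (charFun_cont_aux t).aestronglyMeasurable
  · intro t
    filter_upwards with x
    rw [Complex.norm_exp]
    simp
  · exact integrable_const 1
  · filter_upwards with x
    apply Complex.continuous_exp.comp
    apply continuous_const.mul
    apply Complex.continuous_ofReal.comp
    exact continuous_finset_sum _ fun i _ => (continuous_apply i).mul continuous_const

lemma cfAux_map (μ : Measure (Fin n → ℝ)) [IsFiniteMeasure μ]
    (t : EuclideanSpace ℝ (Fin n)) :
    cfAux (μ.map (MeasurableEquiv.toLp 2 (Fin n → ℝ))) t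
      = charFunOfMeasure μ (fun i => t i) := by
  rw [cfAux, integral_map (MeasurableEquiv.toLp 2 (Fin n → ℝ)).measurable.aemeasurable]
  · rw [charFunOfMeasure]
    congr 1
    funext x
    have hin : (⟪t, (MeasurableEquiv.toLp 2 (Fin n → ℝ)) x⟫ : ℝ) = ∑ i, t i * x i := by
      rw [PiLp.inner_apply]
      simp [MeasurableEquiv.coe_toLp, RCLike.inner_apply, mul_comm]
    rw [hin, mul_comm]
  · apply Continuous.aestronglyMeasurable
    apply Complex.continuous_exp.comp
    exact (Complex.continuous_ofReal.comp (continuous_const.inner continuous_id)).mul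
      continuous_const

/-- deconvolution lemma: if `ν` is a probability measure on `ℝ^n`
whose characteristic function is nonzero for Lebesgue-almost every `t`, and `μ₁, μ₂`
are finite measures with `μ₁ ∗ ν = μ₂ ∗ ν` (convolution), then `μ₁ = μ₂`. -/
theorem deconvolution_unique (n : ℕ) (hn : 1 ≤ n)
    (ν : Measure (Fin n → ℝ)) [IsProbabilityMeasure ν]
    (hν : ∀ᵐ t : Fin n → ℝ ∂volume, charFunOfMeasure ν t ≠ 0)
    (μ₁ μ₂ : Measure (Fin n → ℝ)) [IsFiniteMeasure μ₁] [IsFiniteMeasure μ₂]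
    (h : μ₁.conv ν = μ₂.conv ν) :
    μ₁ = μ₂ := by
  have hae : charFunOfMeasure μ₁ =ᵐ[volume] charFunOfMeasure μ₂ := by
    filter_upwards [hν] with t ht
    have hcc : charFunOfMeasure μ₁ t * charFunOfMeasure ν t
        = charFunOfMeasure μ₂ t * charFunOfMeasure ν t := by
      rw [← charFunOfMeasure_conv, ← charFunOfMeasure_conv, h]
    exact mul_right_cancel₀ ht hcc
  have heq : charFunOfMeasure μ₁ = charFunOfMeasure μ₂ :=
    ((charFunOfMeasure_continuous μ₁).ae_eq_iff_eq volume
      (charFunOfMeasure_continuous μ₂)).mp hae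
  set e := (MeasurableEquiv.toLp 2 (Fin n → ℝ)) with he
  haveI h1 : IsFiniteMeasure (μ₁.map e) := by
    constructor; rw [MeasurableEquiv.map_apply]; exact measure_lt_top _ _
  haveI h2 : IsFiniteMeasure (μ₂.map e) := by
    constructor; rw [MeasurableEquiv.map_apply]; exact measure_lt_top _ _
  have hmap : μ₁.map e = μ₂.map e := by
    apply ext_of_cfAux
    funext t
    rw [cfAux_map, cfAux_map, heq]
  have := congrArg (fun m : Measure (EuclideanSpace ℝ (Fin n)) => m.map e.symm) hmap
  simpa [MeasurableEquiv.map_symm_map] using this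


end Pi
end
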